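/- In an exact naturally Mal'tsev category with coequalizers, for a regular epimorphism q : X → Y and a split monomorphism δ : X → S with retraction f : S → X, the commutative square formed by c : S → C (pushout injection), f : S → X, q : X → Y and the induced retraction f̄ : C → Y is a pullback. -/

import Mathlib

open CategoryTheory CategoryTheory.Limits

universe v u v' u'

variable {C : Type u} [Category.{v} C]

/-- An internal relation on an object `X`: a pair of jointly monic morphisms. -/
structure RelOn (X : C) where
  R : C
  r1 : R ⟶ X
  r2 : R ⟶ X
  jmono : ∀ {Z : C} (f g : Z ⟶ R), f ≫ r1 = g ≫ r1 → f ≫ r2 = g ≫ r2 → f = g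

namespace RelOn

variable {X : C} (ρ : RelOn X)

def Reflexive : Prop :=
  ∃ δ : X ⟶ ρ.R, δ ≫ ρ.r1 = 𝟙 X ∧ δ ≫ ρ.r2 = 𝟙 X

def Symmetric : Prop :=
  ∃ σ : ρ.R ⟶ ρ.R, σ ≫ ρ.r1 = ρ.r2 ∧ σ ≫ ρ.r2 = ρ.r1

/-- Transitivity, formulated with generalized elements. -/
def Transitive : Prop :=
  ∀ {Z : C} (a b : Z ⟶ ρ.R), a ≫ ρ.r2 = b ≫ ρ.r1 →
    ∃ t : Z ⟶ ρ.R, t ≫ ρ.r1 = a ≫ ρ.r1 ∧ t ≫ ρ.r2 = b ≫ ρ.r2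

def IsEquivalence : Prop := ρ.Reflexive ∧ ρ.Symmetric ∧ ρ.Transitive

/-- The relation is effective: it is the kernel pair of some morphism. -/
def Effective : Prop :=
  ∃ (Y : C) (f : X ⟶ Y) (h : ρ.r1 ≫ f = ρ.r2 ≫ f),
    Nonempty (IsLimit (PullbackCone.mk ρ.r1 ρ.r2 h))

end RelOn

/-- A Mal'tsev category: every internal reflexive relation is an equivalence relation. -/
class MaltsevCat (C : Type u) [Category.{v} C] : Prop where
  refl_is_equiv : ∀ {X : C} (ρ : RelOn X), ρ.Reflexive → ρ.Symmetric ∧ ρ.Transitive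

/-- A regular category: finitely complete, coequalizers of kernel pairs,
pullback-stable regular epimorphisms. -/
class RegularCat (C : Type u) [Category.{v} C] : Prop where
  hasFiniteLimits : HasFiniteLimits C
  hasCoeqOfKernelPair : ∀ {A B R : C} (f : A ⟶ B) (p1 p2 : R ⟶ A) (h : p1 ≫ f = p2 ≫ f),
    Nonempty (IsLimit (PullbackCone.mk p1 p2 h)) → HasCoequalizer p1 p2
  regEpiStable : ∀ {P A B Z : C} (f : A ⟶ B) (g : Z ⟶ B) (p1 : P ⟶ A) (p2 : P ⟶ Z)
    (h : p1 ≫ f = p2 ≫ g), Nonempty (IsLimit (PullbackCone.mk p1 p2 h)) →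
    Nonempty (RegularEpi f) → Nonempty (RegularEpi p2)

/-- A Barr-exact category: regular and every equivalence relation is effective. -/
class ExactCat (C : Type u) [Category.{v} C] extends RegularCat C : Prop where
  effective : ∀ {X : C} (ρ : RelOn X), ρ.IsEquivalence → ρ.Effective

/-- An internal reflexive graph. -/
structure ReflexiveGraph (C : Type u) [Category.{v} C] where
  C1 : C
  C0 : C
  d : C1 ⟶ C0
  c : C1 ⟶ C0
  e : C0 ⟶ C1
  ed : e ≫ d = 𝟙 C0
  ec : e ≫ c = 𝟙 C0

/-- An internal category structure on a reflexive graph, formulated via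
generalized elements (equivalent to the usual pullback formulation in a
finitely complete category). `comp a b _` is the composite "`a` followed by `b`". -/
structure CatStruct {C : Type u} [Category.{v} C] (G : ReflexiveGraph C) where
  comp : ∀ {Z : C} (a b : Z ⟶ G.C1), a ≫ G.c = b ≫ G.d → (Z ⟶ G.C1)
  comp_natural : ∀ {W Z : C} (w : W ⟶ Z) (a b : Z ⟶ G.C1) (h : a ≫ G.c = b ≫ G.d)
      (h' : (w ≫ a) ≫ G.c = (w ≫ b) ≫ G.d),
      w ≫ comp a b h = comp (w ≫ a) (w ≫ b) h'
  comp_d : ∀ {Z : C} (a b : Z ⟶ G.C1) (h : a ≫ G.c = b ≫ G.d), comp a b h ≫ G.d = a ≫ G.d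
  comp_c : ∀ {Z : C} (a b : Z ⟶ G.C1) (h : a ≫ G.c = b ≫ G.d), comp a b h ≫ G.c = b ≫ G.c
  comp_unit_l : ∀ {Z : C} (a : Z ⟶ G.C1) (h : (a ≫ G.d ≫ G.e) ≫ G.c = a ≫ G.d),
      comp (a ≫ G.d ≫ G.e) a h = a
  comp_unit_r : ∀ {Z : C} (a : Z ⟶ G.C1) (h : a ≫ G.c = (a ≫ G.c ≫ G.e) ≫ G.d),
      comp a (a ≫ G.c ≫ G.e) h = a
  comp_assoc : ∀ {Z : C} (a b c' : Z ⟶ G.C1) (h1 : a ≫ G.c = b ≫ G.d)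
      (h2 : b ≫ G.c = c' ≫ G.d)
      (h3 : comp a b h1 ≫ G.c = c' ≫ G.d)
      (h4 : a ≫ G.c = comp b c' h2 ≫ G.d),
      comp (comp a b h1) c' h3 = comp a (comp b c' h2) h4

/-- The internal category has inverses, i.e. is an internal groupoid. -/
def CatStruct.HasInverses {C : Type u} [Category.{v} C] {G : ReflexiveGraph C}
    (S : CatStruct G) : Prop :=
  ∃ i : G.C1 ⟶ G.C1, i ≫ G.d = G.c ∧ i ≫ G.c = G.d ∧
    (∀ {Z : C} (a : Z ⟶ G.C1) (h : a ≫ G.c = (a ≫ i) ≫ G.d),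
      S.comp a (a ≫ i) h = a ≫ G.d ≫ G.e) ∧
    (∀ {Z : C} (a : Z ⟶ G.C1) (h : (a ≫ i) ≫ G.c = a ≫ G.d),
      S.comp (a ≫ i) a h = a ≫ G.c ≫ G.e)

/-- An internal groupoid. -/
structure GroupoidObj (C : Type u) [Category.{v} C] where
  graph : ReflexiveGraph C
  str : CatStruct graph
  hasInv : str.HasInverses

/-- Internal functors between internal groupoids. -/
@[ext]
structure GrpdHom (A B : GroupoidObj C) where
  f0 : A.graph.C0 ⟶ B.graph.C0
  f1 : A.graph.C1 ⟶ B.graph.C1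
  hd : f1 ≫ B.graph.d = A.graph.d ≫ f0
  hc : f1 ≫ B.graph.c = A.graph.c ≫ f0
  he : A.graph.e ≫ f1 = f0 ≫ B.graph.e
  hm : ∀ {Z : C} (a b : Z ⟶ A.graph.C1) (h : a ≫ A.graph.c = b ≫ A.graph.d)
      (h' : (a ≫ f1) ≫ B.graph.c = (b ≫ f1) ≫ B.graph.d),
      A.str.comp a b h ≫ f1 = B.str.comp (a ≫ f1) (b ≫ f1) h'

lemma GrpdHom.cond {A B : GroupoidObj C} (f : GrpdHom A B) {Z : C} {a b : Z ⟶ A.graph.C1}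
    (h : a ≫ A.graph.c = b ≫ A.graph.d) :
    (a ≫ f.f1) ≫ B.graph.c = (b ≫ f.f1) ≫ B.graph.d := by
  rw [Category.assoc, f.hc, Category.assoc, f.hd, ← Category.assoc, h, Category.assoc]

def GrpdHom.id (A : GroupoidObj C) : GrpdHom A A where
  f0 := 𝟙 _
  f1 := 𝟙 _
  hd := by simp
  hc := by simp
  he := by simp
  hm := by intros; simp

def GrpdHom.comp {A B D : GroupoidObj C} (f : GrpdHom A B) (g : GrpdHom B D) : GrpdHom A D where
  f0 := f.f0 ≫ g.f0
  f1 := f.f1 ≫ g.f1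
  hd := by rw [Category.assoc, g.hd, ← Category.assoc, f.hd, Category.assoc]
  hc := by rw [Category.assoc, g.hc, ← Category.assoc, f.hc, Category.assoc]
  he := by rw [← Category.assoc, f.he, Category.assoc, g.he, ← Category.assoc]
  hm := by
    intro Z a b h h'
    rw [← Category.assoc, f.hm a b h (f.cond h), g.hm _ _ (f.cond h) (g.cond (f.cond h))]
    simp only [Category.assoc]

instance : Category (GroupoidObj C) where
  Hom := GrpdHom
  id := GrpdHom.id
  comp := GrpdHom.comp
  id_comp f := by apply GrpdHom.ext <;> simp [GrpdHom.comp, GrpdHom.id]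
  comp_id f := by apply GrpdHom.ext <;> simp [GrpdHom.comp, GrpdHom.id]
  assoc f g h := by apply GrpdHom.ext <;> simp [GrpdHom.comp]

/-- Coerce a morphism of internal groupoids to its underlying data. -/
def homToGrpdHom {A B : GroupoidObj C} (f : A ⟶ B) : GrpdHom A B := f

/-- Morphisms of reflexive graphs. -/
@[ext]
structure RGHom (A B : ReflexiveGraph C) where
  f0 : A.C0 ⟶ B.C0
  f1 : A.C1 ⟶ B.C1
  hd : f1 ≫ B.d = A.d ≫ f0
  hc : f1 ≫ B.c = A.c ≫ f0
  he : A.e ≫ f1 = f0 ≫ B.e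

instance : Category (ReflexiveGraph C) where
  Hom := RGHom
  id A := ⟨𝟙 _, 𝟙 _, by simp, by simp, by simp⟩
  comp f g := ⟨f.f0 ≫ g.f0, f.f1 ≫ g.f1,
    by rw [Category.assoc, g.hd, ← Category.assoc, f.hd, Category.assoc],
    by rw [Category.assoc, g.hc, ← Category.assoc, f.hc, Category.assoc],
    by rw [← Category.assoc, f.he, Category.assoc, g.he, ← Category.assoc]⟩
  id_comp f := by apply RGHom.ext <;> simp
  comp_id f := by apply RGHom.ext <;> simp
  assoc f g h := by apply RGHom.ext <;> simp

def homToRGHom {A B : ReflexiveGraph C} (f : A ⟶ B) : RGHom A B := f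

/-- The forgetful functor from internal groupoids to reflexive graphs. -/
def forgetToRG (C : Type u) [Category.{v} C] : GroupoidObj C ⥤ ReflexiveGraph C where
  obj A := A.graph
  map f := ⟨(homToGrpdHom f).f0, (homToGrpdHom f).f1, (homToGrpdHom f).hd,
    (homToGrpdHom f).hc, (homToGrpdHom f).he⟩
  map_id A := by apply RGHom.ext <;> rfl
  map_comp f g := by apply RGHom.ext <;> rfl

/-- A discrete internal groupoid: the unit is an isomorphism. -/
def GroupoidObj.IsDiscrete (A : GroupoidObj C) : Prop := IsIso A.graph.e

/-- An internal double groupoid (an internal groupoid in internal groupoids) is a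
2-groupoid when its groupoid of objects is discrete. -/
def Is2Grpd (D : GroupoidObj (GroupoidObj C)) : Prop := D.graph.C0.IsDiscrete

/-- Zero morphisms, defined without extra structure: morphisms factoring through a
zero object. -/
def IsZeroMor {A B : C} (f : A ⟶ B) : Prop :=
  ∃ (Z : C) (_ : IsZero Z) (g : A ⟶ Z) (h : Z ⟶ B), f = g ≫ h

/-- `κ` is a kernel of `α`. -/
def IsKernelOf {A B K : C} (κ : K ⟶ A) (α : A ⟶ B) : Prop :=
  IsZeroMor (κ ≫ α) ∧ ∀ {Z : C} (g : Z ⟶ A), IsZeroMor (g ≫ α) → ∃! l : Z ⟶ K, l ≫ κ = g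

/-- A split extension with kernel object `Xo`. -/
structure SplitExtOn (Xo : C) where
  A : C
  B : C
  κ : Xo ⟶ A
  α : A ⟶ B
  β : B ⟶ A
  split : β ≫ α = 𝟙 B
  ker : IsKernelOf κ α

/-- A generic split extension with kernel `Xo`: terminal among split extensions
with kernel `Xo` (morphisms being the identity on the kernel). -/
def IsGenericSplitExt {Xo : C} (E : SplitExtOn Xo) : Prop :=
  ∀ E' : SplitExtOn Xo, ∃! vw : (E'.A ⟶ E.A) × (E'.B ⟶ E.B),
    E'.κ ≫ vw.1 = E.κ ∧ vw.1 ≫ E.α = E'.α ≫ vw.2 ∧ E'.β ≫ vw.1 = vw.2 ≫ E.β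

/-- Action representability: every object admits a generic split extension. -/
def ActionRepresentable (C : Type u) [Category.{v} C] : Prop :=
  ∀ X : C, ∃ E : SplitExtOn X, IsGenericSplitExt E

/-- A protoadditive functor: preserves kernels of split epimorphisms. -/
def Protoadditive {X : Type u'} [Category.{v'} X] (H : X ⥤ C) : Prop :=
  ∀ {A B K : X} (α : A ⟶ B) (β : B ⟶ A), β ≫ α = 𝟙 B →
    ∀ (κ : K ⟶ A), IsKernelOf κ α → IsKernelOf (H.map κ) (H.map α)

/-- A semi-abelian category: pointed, Barr-exact, protomodular (split short five
lemma), with binary coproducts. -/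
class SemiAbelian (C : Type u) [Category.{v} C] extends ExactCat C : Prop where
  hasZeroObject : HasZeroObject C
  hasBinaryCoproducts : HasBinaryCoproducts C
  ssfl : ∀ {A B B' Co : C} (k : A ⟶ B) (p : B ⟶ Co) (s : Co ⟶ B)
      (k' : A ⟶ B') (p' : B' ⟶ Co) (s' : Co ⟶ B') (b : B ⟶ B'),
      s ≫ p = 𝟙 Co → s' ≫ p' = 𝟙 Co → IsKernelOf k p → IsKernelOf k' p' →
      k ≫ b = k' → b ≫ p' = p → s ≫ b = s' → IsIso b

/-- A natural Mal'tsev operation on a category with binary products. -/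
def IsNaturallyMaltsev (C : Type u) [Category.{v} C] [HasBinaryProducts C] : Prop :=
  ∃ p : ∀ A : C, (A ⨯ A) ⨯ A ⟶ A,
    (∀ {A B : C} (f : A ⟶ B), prod.map (prod.map f f) f ≫ p B = p A ≫ f) ∧
    (∀ A : C, prod.lift (prod.lift prod.fst prod.snd) prod.snd ≫ p A
        = (prod.fst : A ⨯ A ⟶ A)) ∧
    (∀ A : C, prod.lift (prod.lift prod.fst prod.fst) prod.snd ≫ p A
        = (prod.snd : A ⨯ A ⟶ A))

namespace Stmt14Aux

variable {C : Type u} [Category.{v} C] [HasBinaryProducts C]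

noncomputable def mP (p : ∀ A : C, (A ⨯ A) ⨯ A ⟶ A) {Z A : C} (a b c : Z ⟶ A) : Z ⟶ A :=
  prod.lift (prod.lift a b) c ≫ p A

theorem mP_comp (p : ∀ A : C, (A ⨯ A) ⨯ A ⟶ A)
    (hnat : ∀ {A B : C} (f : A ⟶ B), prod.map (prod.map f f) f ≫ p B = p A ≫ f)
    {Z A B : C} (a b c : Z ⟶ A) (g : A ⟶ B) :
    mP p a b c ≫ g = mP p (a ≫ g) (b ≫ g) (c ≫ g) := by
  have h : prod.lift (prod.lift a b) c ≫ prod.map (prod.map g g) g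
      = prod.lift (prod.lift (a ≫ g) (b ≫ g)) (c ≫ g) := by
    simp [prod.lift_map]
  rw [mP, mP, Category.assoc, ← hnat g, ← Category.assoc, h]

theorem mP_right (p : ∀ A : C, (A ⨯ A) ⨯ A ⟶ A)
    (hlp : ∀ A : C, prod.lift (prod.lift prod.fst prod.snd) prod.snd ≫ p A
      = (prod.fst : A ⨯ A ⟶ A))
    {Z A : C} (a b : Z ⟶ A) : mP p a b b = a := by
  have h : prod.lift (prod.lift a b) b
      = prod.lift a b ≫ prod.lift (prod.lift prod.fst prod.snd) prod.snd := by simp [prod.lift_fst, prod.lift_snd]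
  rw [mP, h, Category.assoc, hlp A, prod.lift_fst]

theorem mP_left (p : ∀ A : C, (A ⨯ A) ⨯ A ⟶ A)
    (hrp : ∀ A : C, prod.lift (prod.lift prod.fst prod.fst) prod.snd ≫ p A
      = (prod.snd : A ⨯ A ⟶ A))
    {Z A : C} (a b : Z ⟶ A) : mP p a a b = b := by
  have h : prod.lift (prod.lift a a) b
      = prod.lift a b ≫ prod.lift (prod.lift prod.fst prod.fst) prod.snd := by simp [prod.lift_fst, prod.lift_snd]
  rw [mP, h, Category.assoc, hrp A, prod.lift_snd]

theorem mP_interchange (p : ∀ A : C, (A ⨯ A) ⨯ A ⟶ A)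
    (hnat : ∀ {A B : C} (f : A ⟶ B), prod.map (prod.map f f) f ≫ p B = p A ≫ f)
    {Z A : C} (a b c d e f g h i : Z ⟶ A) :
    mP p (mP p a b c) (mP p d e f) (mP p g h i)
      = mP p (mP p a d g) (mP p b e h) (mP p c f i) := by
  set r1 : Z ⟶ (A ⨯ A) ⨯ A := prod.lift (prod.lift a b) c with hr1
  set r2 : Z ⟶ (A ⨯ A) ⨯ A := prod.lift (prod.lift d e) f with hr2
  set r3 : Z ⟶ (A ⨯ A) ⨯ A := prod.lift (prod.lift g h) i with hr3
  set T : Z ⟶ (((A ⨯ A) ⨯ A) ⨯ ((A ⨯ A) ⨯ A)) ⨯ ((A ⨯ A) ⨯ A) :=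
    prod.lift (prod.lift r1 r2) r3 with hT
  have key : T ≫ p ((A ⨯ A) ⨯ A)
      = prod.lift (prod.lift (mP p a d g) (mP p b e h)) (mP p c f i) := by
    apply Limits.prod.hom_ext
    · rw [Category.assoc, ← hnat (prod.fst : (A ⨯ A) ⨯ A ⟶ A ⨯ A)]
      have hT1 : T ≫ prod.map (prod.map prod.fst prod.fst) prod.fst
          = prod.lift (prod.lift (prod.lift a b) (prod.lift d e)) (prod.lift g h) := by
        simp [prod.lift_fst, prod.lift_snd, hT, hr1, hr2, hr3, prod.lift_map]
      rw [← Category.assoc, hT1]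
      apply Limits.prod.hom_ext
      · rw [Category.assoc, ← hnat (prod.fst : A ⨯ A ⟶ A), prod.lift_fst, ← Category.assoc]
        have h2 : prod.lift (prod.lift (prod.lift a b) (prod.lift d e)) (prod.lift g h)
            ≫ prod.map (prod.map prod.fst prod.fst) prod.fst
            = prod.lift (prod.lift a d) g := by simp [prod.lift_fst, prod.lift_snd, prod.lift_map]
        rw [h2]; simp [prod.lift_fst, prod.lift_snd, mP]
      · rw [Category.assoc, ← hnat (prod.snd : A ⨯ A ⟶ A), prod.lift_fst, ← Category.assoc]
        have h2 : prod.lift (prod.lift (prod.lift a b) (prod.lift d e)) (prod.lift g h)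
            ≫ prod.map (prod.map prod.snd prod.snd) prod.snd
            = prod.lift (prod.lift b e) h := by simp [prod.lift_fst, prod.lift_snd, prod.lift_map]
        rw [h2]; simp [prod.lift_fst, prod.lift_snd, mP]
    · rw [Category.assoc, ← hnat (prod.snd : (A ⨯ A) ⨯ A ⟶ A), prod.lift_snd]
      have hT2 : T ≫ prod.map (prod.map prod.snd prod.snd) prod.snd
          = prod.lift (prod.lift c f) i := by
        simp [prod.lift_fst, prod.lift_snd, hT, hr1, hr2, hr3, prod.lift_map]
      rw [← Category.assoc, hT2]; simp [prod.lift_fst, prod.lift_snd, mP]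
  have lhs : mP p (mP p a b c) (mP p d e f) (mP p g h i)
      = T ≫ p ((A ⨯ A) ⨯ A) ≫ p A := by
    rw [← hnat (p A)]
    have h2 : T ≫ prod.map (prod.map (p A) (p A)) (p A)
        = prod.lift (prod.lift (r1 ≫ p A) (r2 ≫ p A)) (r3 ≫ p A) := by
      simp [prod.lift_fst, prod.lift_snd, hT, prod.lift_map]
    rw [← Category.assoc, h2]; simp [prod.lift_fst, prod.lift_snd, mP, hr1, hr2, hr3]
  rw [lhs, ← Category.assoc, key]; simp [prod.lift_fst, prod.lift_snd, mP]

theorem mP_cancel (p : ∀ A : C, (A ⨯ A) ⨯ A ⟶ A)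
    (hnat : ∀ {A B : C} (f : A ⟶ B), prod.map (prod.map f f) f ≫ p B = p A ≫ f)
    (hlp : ∀ A : C, prod.lift (prod.lift prod.fst prod.snd) prod.snd ≫ p A
      = (prod.fst : A ⨯ A ⟶ A))
    (hrp : ∀ A : C, prod.lift (prod.lift prod.fst prod.fst) prod.snd ≫ p A
      = (prod.snd : A ⨯ A ⟶ A))
    {Z A : C} (a x y z : Z ⟶ A) :
    mP p (mP p a x y) y z = mP p a x z := by
  have h1 : mP p x x y = y := mP_left p hrp x y
  have h2 : mP p x x z = z := mP_left p hrp x z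
  calc mP p (mP p a x y) y z
      = mP p (mP p a x y) (mP p x x y) (mP p x x z) := by rw [h1, h2]
    _ = mP p (mP p a x x) (mP p x x x) (mP p y y z) := mP_interchange p hnat a x y x x y x x z
    _ = mP p a x z := by
        rw [mP_right p hlp a x, mP_right p hlp x x, mP_left p hrp y z]


theorem mP_precomp (p : ∀ A : C, (A ⨯ A) ⨯ A ⟶ A)
    {W Z A : C} (w : W ⟶ Z) (a b c : Z ⟶ A) :
    w ≫ mP p a b c = mP p (w ≫ a) (w ≫ b) (w ≫ c) := by
  rw [mP, mP, ← Category.assoc, prod.comp_lift, prod.comp_lift]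

end Stmt14Aux

/-- In an exact naturally Mal'tsev category with coequalizers, the square
formed by the pushout injection `c`, the retraction `f`, the regular epi `q` and the
induced retraction `fbar` is a pullback (Bourn's characterization). -/



theorem stmt14 {C : Type u} [Category.{v} C] [HasFiniteLimits C] [HasCoequalizers C]
    [ExactCat C] (hNM : IsNaturallyMaltsev C)
    {X Y S : C} (q : X ⟶ Y) (hq : Nonempty (RegularEpi q))
    (δ : X ⟶ S) (f : S ⟶ X) (hf : δ ≫ f = 𝟙 X)
    {K : C} (q1 q2 : K ⟶ X) (hk : q1 ≫ q = q2 ≫ q)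
    (hkp : Nonempty (IsLimit (PullbackCone.mk q1 q2 hk)))
    {Cc : C} (c : S ⟶ Cc) (hcw : (q1 ≫ δ) ≫ c = (q2 ≫ δ) ≫ c)
    (hcoeq : Nonempty (IsColimit (Cofork.ofπ c hcw)))
    (δbar : Y ⟶ Cc) (hδbar : q ≫ δbar = δ ≫ c)
    (fbar : Cc ⟶ Y) (h1 : δbar ≫ fbar = 𝟙 Y) (h2 : c ≫ fbar = f ≫ q) :
    IsPullback f c q fbar := by
  open Stmt14Aux in
  obtain ⟨p, hnat, hlp, hrp⟩ := hNM
  obtain ⟨hkl⟩ := hkp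
  obtain ⟨hco⟩ := hcoeq
  -- the kernel pair is jointly monic and has a lifting property
  have kjm : ∀ {Z : C} (a b : Z ⟶ K), a ≫ q1 = b ≫ q1 → a ≫ q2 = b ≫ q2 → a = b := by
    intro Z a b hA hB
    exact PullbackCone.IsLimit.hom_ext hkl (by exact hA) (by exact hB)
  have klift : ∀ {Z : C} (a b : Z ⟶ X), a ≫ q = b ≫ q →
      ∃ l : Z ⟶ K, l ≫ q1 = a ∧ l ≫ q2 = b := by
    intro Z a b h
    obtain ⟨l, hl1, hl2⟩ := PullbackCone.IsLimit.lift' hkl a b h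
    exact ⟨l, by exact hl1, by exact hl2⟩
  -- the candidate kernel relation of `c`
  set E : C := pullback f q1 with hE
  set e1 : E ⟶ S := pullback.fst f q1 with he1
  set e2 : E ⟶ K := pullback.snd f q1 with he2
  have ecd : e1 ≫ f = e2 ≫ q1 := pullback.condition
  set ρ2 : E ⟶ S := mP p e1 (e2 ≫ q1 ≫ δ) (e2 ≫ q2 ≫ δ) with hρ2
  have hρ2f : ρ2 ≫ f = e2 ≫ q2 := by
    rw [hρ2, mP_comp p hnat]
    have hA : (e2 ≫ q1 ≫ δ) ≫ f = e2 ≫ q1 := by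
      simp only [Category.assoc, hf, Category.comp_id]
    have hB : (e2 ≫ q2 ≫ δ) ≫ f = e2 ≫ q2 := by
      simp only [Category.assoc, hf, Category.comp_id]
    rw [hA, hB, ecd, mP_left p hrp]
  have ρ2pre : ∀ {W : C} (w : W ⟶ E),
      w ≫ ρ2 = mP p (w ≫ e1) (w ≫ e2 ≫ q1 ≫ δ) (w ≫ e2 ≫ q2 ≫ δ) := by
    intro W w
    rw [hρ2, mP_precomp p]
  -- it is a reflexive relation
  have rel : RelOn S := {
    R := E, r1 := e1, r2 := ρ2,
    jmono := by
      intro Z a b hA hB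
      have hB' : a ≫ e2 ≫ q2 = b ≫ e2 ≫ q2 := by
        have := congrArg (· ≫ f) hB
        simpa only [Category.assoc, hρ2f] using this
      have hA' : a ≫ e2 ≫ q1 = b ≫ e2 ≫ q1 := by
        have := congrArg (· ≫ f) hA
        simpa only [Category.assoc, ecd] using this
      have he : a ≫ e2 = b ≫ e2 :=
        kjm _ _ (by simpa only [Category.assoc] using hA')
          (by simpa only [Category.assoc] using hB')
      exact pullback.hom_ext (by simpa [he1] using hA) (by simpa [he2] using he) }
  -- reflexivity
  obtain ⟨d0, hd01, hd02⟩ := klift f f rfl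
  have hrefl : ∃ d : S ⟶ E, d ≫ e1 = 𝟙 S ∧ d ≫ ρ2 = 𝟙 S := by
    refine ⟨pullback.lift (𝟙 S) d0 (by rw [hd01]; simp), ?_, ?_⟩
    · exact pullback.lift_fst _ _ _
    · have hE1 : pullback.lift (𝟙 S) d0 (by rw [hd01]; simp) ≫ e1 = 𝟙 S := pullback.lift_fst _ _ _
      have hE2 : pullback.lift (𝟙 S) d0 (by rw [hd01]; simp) ≫ e2 = d0 := pullback.lift_snd _ _ _
      rw [ρ2pre]
      have hA : pullback.lift (𝟙 S) d0 (by rw [hd01]; simp) ≫ e2 ≫ q1 ≫ δ = f ≫ δ := by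
        rw [← Category.assoc, hE2, ← Category.assoc, hd01]
      have hB : pullback.lift (𝟙 S) d0 (by rw [hd01]; simp) ≫ e2 ≫ q2 ≫ δ = f ≫ δ := by
        rw [← Category.assoc, hE2, ← Category.assoc, hd02]
      rw [hE1, hA, hB, mP_right p hlp]
  -- symmetry
  obtain ⟨sw, hsw1, hsw2⟩ := klift (e2 ≫ q2) (e2 ≫ q1)
    (by simp only [Category.assoc]; rw [hk])
  have hsymm : ∃ σ : E ⟶ E, σ ≫ e1 = ρ2 ∧ σ ≫ ρ2 = e1 := by
    have hσc : ρ2 ≫ f = sw ≫ q1 := by rw [hρ2f, hsw1]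
    refine ⟨pullback.lift ρ2 sw hσc, ?_, ?_⟩
    · exact pullback.lift_fst _ _ _
    · have hσ1 : pullback.lift ρ2 sw hσc ≫ e1 = ρ2 := pullback.lift_fst _ _ _
      have hσ2 : pullback.lift ρ2 sw hσc ≫ e2 = sw := pullback.lift_snd _ _ _
      rw [ρ2pre]
      have hA : pullback.lift ρ2 sw hσc ≫ e2 ≫ q1 ≫ δ = e2 ≫ q2 ≫ δ := by
        rw [← Category.assoc, hσ2, reassoc_of% hsw1]
      have hB : pullback.lift ρ2 sw hσc ≫ e2 ≫ q2 ≫ δ = e2 ≫ q1 ≫ δ := by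
        rw [← Category.assoc, hσ2, reassoc_of% hsw2]
      rw [hA, hB, hσ1, hρ2, mP_cancel p hnat hlp hrp, mP_right p hlp]
  -- transitivity
  have htrans : ∀ {Z : C} (a b : Z ⟶ E), a ≫ ρ2 = b ≫ e1 →
      ∃ t : Z ⟶ E, t ≫ e1 = a ≫ e1 ∧ t ≫ ρ2 = b ≫ ρ2 := by
    intro Z a b hab
    have hmid : a ≫ e2 ≫ q2 = b ≫ e2 ≫ q1 := by
      have := congrArg (· ≫ f) hab
      rw [Category.assoc, Category.assoc, hρ2f, ecd] at this
      simpa only [Category.assoc] using this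
    obtain ⟨tk, htk1, htk2⟩ := klift (a ≫ e2 ≫ q1) (b ≫ e2 ≫ q2) (by
      simp only [Category.assoc]
      rw [hk, reassoc_of% hmid, hk])
    have htc : (a ≫ e1) ≫ f = tk ≫ q1 := by rw [htk1, Category.assoc, ecd]
    refine ⟨pullback.lift (a ≫ e1) tk htc, ?_, ?_⟩
    · exact pullback.lift_fst _ _ _
    · have ht1 : pullback.lift (a ≫ e1) tk htc ≫ e1 = a ≫ e1 := pullback.lift_fst _ _ _
      have ht2 : pullback.lift (a ≫ e1) tk htc ≫ e2 = tk := pullback.lift_snd _ _ _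
      rw [ρ2pre, ρ2pre]
      have hA : pullback.lift (a ≫ e1) tk htc ≫ e2 ≫ q1 ≫ δ = a ≫ e2 ≫ q1 ≫ δ := by
        rw [← Category.assoc, ht2, reassoc_of% htk1]
      have hB : pullback.lift (a ≫ e1) tk htc ≫ e2 ≫ q2 ≫ δ = b ≫ e2 ≫ q2 ≫ δ := by
        rw [← Category.assoc, ht2, reassoc_of% htk2]
      have hbe1 : b ≫ e1 = mP p (a ≫ e1) (a ≫ e2 ≫ q1 ≫ δ) (a ≫ e2 ≫ q2 ≫ δ) := by
        rw [← hab, ρ2pre]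
      have hbq1 : b ≫ e2 ≫ q1 ≫ δ = a ≫ e2 ≫ q2 ≫ δ := by
        simp only [← Category.assoc]
        simp only [← Category.assoc] at hmid
        rw [hmid]
      rw [hA, hB, ht1, hbe1, hbq1, mP_cancel p hnat hlp hrp]
  -- effectivity of the relation
  obtain ⟨Y0, g, hg, ⟨hgl⟩⟩ := ExactCat.effective
    (⟨E, e1, ρ2, by
      intro Z a b hA hB
      have hB' : a ≫ e2 ≫ q2 = b ≫ e2 ≫ q2 := by
        have := congrArg (· ≫ f) hB
        rw [Category.assoc, Category.assoc, hρ2f] at this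
        simpa only [Category.assoc] using this
      have hA' : a ≫ e2 ≫ q1 = b ≫ e2 ≫ q1 := by
        have := congrArg (· ≫ f) hA
        rw [Category.assoc, Category.assoc, ecd] at this
        simpa only [Category.assoc] using this
      have he : a ≫ e2 = b ≫ e2 :=
        kjm _ _ (by simpa only [Category.assoc] using hA')
          (by simpa only [Category.assoc] using hB')
      exact pullback.hom_ext (by simpa [he1] using hA) (by simpa [he2] using he)⟩ : RelOn S)
    ⟨hrefl, hsymm, htrans⟩
  have hg' : e1 ≫ g = ρ2 ≫ g := hg
  have hgw : (q1 ≫ δ) ≫ g = (q2 ≫ δ) ≫ g := by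
    have hm0c : (q1 ≫ δ) ≫ f = 𝟙 K ≫ q1 := by
      rw [Category.assoc, hf]; simp
    have hm01 : pullback.lift (q1 ≫ δ) (𝟙 K) hm0c ≫ e1 = q1 ≫ δ := pullback.lift_fst _ _ _
    have hm02 : pullback.lift (q1 ≫ δ) (𝟙 K) hm0c ≫ e2 = 𝟙 K := pullback.lift_snd _ _ _
    have hρ : pullback.lift (q1 ≫ δ) (𝟙 K) hm0c ≫ ρ2 = q2 ≫ δ := by
      rw [ρ2pre]
      have hA : pullback.lift (q1 ≫ δ) (𝟙 K) hm0c ≫ e2 ≫ q1 ≫ δ = q1 ≫ δ := by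
        rw [← Category.assoc, hm02, Category.id_comp]
      have hB : pullback.lift (q1 ≫ δ) (𝟙 K) hm0c ≫ e2 ≫ q2 ≫ δ = q2 ≫ δ := by
        rw [← Category.assoc, hm02, Category.id_comp]
      rw [hA, hB, hm01, mP_left p hrp]
    rw [← hm01, ← hρ, Category.assoc, Category.assoc, hg']
  obtain ⟨mm, hmm⟩ := Cofork.IsColimit.desc' hco g hgw
  have hm' : c ≫ mm = g := by simpa using hmm
  -- pairs identified by `c` lie in the relation
  have kfact : ∀ {Z : C} (u u' : Z ⟶ S), u ≫ c = u' ≫ c →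
      ∃ h : Z ⟶ E, h ≫ e1 = u ∧ h ≫ ρ2 = u' := by
    intro Z u u' huc
    have hug : u ≫ g = u' ≫ g := by
      rw [← hm', ← Category.assoc, ← Category.assoc, huc]
    obtain ⟨l, hl1, hl2⟩ := PullbackCone.IsLimit.lift' hgl u u' hug
    exact ⟨l, by exact hl1, by exact hl2⟩
  -- `f` and `c` are jointly monic
  have jm : ∀ {Z : C} (u u' : Z ⟶ S), u ≫ f = u' ≫ f → u ≫ c = u' ≫ c → u = u' := by
    intro Z u u' hFf hCc
    obtain ⟨h, hh1, hh2⟩ := kfact u u' hCc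
    have hq1' : h ≫ e2 ≫ q1 = u ≫ f := by rw [← ecd, ← Category.assoc, hh1]
    have hq2' : h ≫ e2 ≫ q2 = u' ≫ f := by rw [← hρ2f, ← Category.assoc, hh2]
    have step : h ≫ ρ2 = mP p (h ≫ e1) (h ≫ e2 ≫ q1 ≫ δ) (h ≫ e2 ≫ q2 ≫ δ) :=
      ρ2pre h
    have hA : h ≫ e2 ≫ q1 ≫ δ = (u ≫ f) ≫ δ := by
      simp only [← Category.assoc]
      simp only [← Category.assoc] at hq1'
      rw [hq1']
    have hB : h ≫ e2 ≫ q2 ≫ δ = (u' ≫ f) ≫ δ := by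
      simp only [← Category.assoc]
      simp only [← Category.assoc] at hq2'
      rw [hq2']
    rw [← hh2, step, hA, hB, hh1, ← hFf, mP_right p hlp]
  -- `c` is a regular epimorphism
  have rc : RegularEpi c := ⟨K, q1 ≫ δ, q2 ≫ δ, hcw, hco⟩
  -- construction of the lift
  have main : ∀ s : PullbackCone q fbar, ∃ u : s.pt ⟶ S, u ≫ f = s.fst ∧ u ≫ c = s.snd := by
    intro s
    set sl : pullback c s.snd ⟶ S := pullback.fst c s.snd with hsl
    set π : pullback c s.snd ⟶ s.pt := pullback.snd c s.snd with hπ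
    have pcond : sl ≫ c = π ≫ s.snd := pullback.condition
    obtain ⟨re⟩ := RegularCat.regEpiStable c s.snd sl π pcond ⟨pullbackIsPullback c s.snd⟩ ⟨rc⟩
    haveI := re; haveI : Epi π := RegularEpi.epi π re
    set u' : pullback c s.snd ⟶ S := mP p sl (sl ≫ f ≫ δ) (π ≫ s.fst ≫ δ) with hu'
    have hu'f : u' ≫ f = π ≫ s.fst := by
      rw [hu', mP_comp p hnat]
      have hA : (sl ≫ f ≫ δ) ≫ f = sl ≫ f := by
        simp only [Category.assoc, hf, Category.comp_id]
      have hB : (π ≫ s.fst ≫ δ) ≫ f = π ≫ s.fst := by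
        simp only [Category.assoc, hf, Category.comp_id]
      rw [hA, hB, mP_left p hrp]
    have hqq : (sl ≫ f) ≫ q = (π ≫ s.fst) ≫ q := by
      simp only [Category.assoc]
      rw [← h2, ← Category.assoc, pcond, Category.assoc, ← s.condition]
    have key2 : (sl ≫ f ≫ δ) ≫ c = (π ≫ s.fst ≫ δ) ≫ c := by
      simp only [Category.assoc]
      rw [← hδbar]
      simp only [← Category.assoc]
      rw [hqq]
    have hu'c : u' ≫ c = π ≫ s.snd := by
      rw [hu', mP_comp p hnat, key2, mP_right p hlp, pcond]
    have hlr : re.left ≫ u' = re.right ≫ u' := by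
      have hslc : (re.left ≫ sl) ≫ c = (re.right ≫ sl) ≫ c := by
        simp only [Category.assoc, pcond]
        simp only [← Category.assoc, re.w]
      obtain ⟨h, hh1, hh2⟩ := kfact (re.left ≫ sl) (re.right ≫ sl) hslc
      have hq1' : h ≫ e2 ≫ q1 = (re.left ≫ sl) ≫ f := by rw [← ecd, ← Category.assoc, hh1]
      have hq2' : h ≫ e2 ≫ q2 = (re.right ≫ sl) ≫ f := by rw [← hρ2f, ← Category.assoc, hh2]
      have hrs : re.right ≫ sl
          = mP p (re.left ≫ sl) ((re.left ≫ sl) ≫ f ≫ δ) ((re.right ≫ sl) ≫ f ≫ δ) := by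
        conv_lhs => rw [← hh2]
        rw [ρ2pre]
        have hA : h ≫ e2 ≫ q1 ≫ δ = (re.left ≫ sl) ≫ f ≫ δ := by
          simp only [← Category.assoc]
          simp only [← Category.assoc] at hq1'
          rw [hq1']
        have hB : h ≫ e2 ≫ q2 ≫ δ = (re.right ≫ sl) ≫ f ≫ δ := by
          simp only [← Category.assoc]
          simp only [← Category.assoc] at hq2'
          rw [hq2']
        rw [hA, hB, hh1]
      rw [hu', mP_precomp p, mP_precomp p]
      have hMl : re.left ≫ sl ≫ f ≫ δ = (re.left ≫ sl) ≫ f ≫ δ := by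
        simp only [Category.assoc]
      have hMr : re.right ≫ sl ≫ f ≫ δ = (re.right ≫ sl) ≫ f ≫ δ := by
        simp only [Category.assoc]
      have hT : re.right ≫ π ≫ s.fst ≫ δ = re.left ≫ π ≫ s.fst ≫ δ := by
        simp only [← Category.assoc]
        rw [← re.w]
      rw [hMl, hMr, hT]
      nth_rewrite 1 [hrs]
      rw [mP_cancel p hnat hlp hrp]
    obtain ⟨u, hu⟩ := Cofork.IsColimit.desc' re.isColimit u' hlr
    have hu2 : π ≫ u = u' := by simpa using hu
    refine ⟨u, ?_, ?_⟩
    · have hh : π ≫ u ≫ f = π ≫ s.fst := by rw [← Category.assoc, hu2, hu'f]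
      exact (cancel_epi π).mp hh
    · have hh : π ≫ u ≫ c = π ≫ s.snd := by rw [← Category.assoc, hu2, hu'c]
      exact (cancel_epi π).mp hh
  exact IsPullback.of_isLimit (PullbackCone.IsLimit.mk h2.symm
    (fun s => (main s).choose)
    (fun s => (main s).choose_spec.1)
    (fun s => (main s).choose_spec.2)
    (fun s m hm1 hm2 => jm m _ (by rw [hm1, (main s).choose_spec.1])
      (by rw [hm2, (main s).choose_spec.2])))
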